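/- Let X be a proper geodesic metric space. If the geodesic segments [α(n), β(n)] between points of two geodesic rays α, β from o have an infinite subsequence all intersecting a fixed closed ball, then some subsequence of these segments converges (uniformly on compact sets, after parameterization by arc length centered at points in the ball) to a complete bi-infinite geodesic line γ, whose two half-lines are at bounded Hausdorff distance from α and β respectively in the sense that γ(∞) is the limit direction of the α(n) and γ(−∞) of the β(n). -/

import Mathlib

open Metric Set Filter
open Topology

/-- `α` is a (q,Q)-quasi-geodesic on the parameter set `s`. -/
def QGeo {X : Type*} [MetricSpace X] (q Q : ℝ) (s : Set ℝ) (α : ℝ → X) : Prop :=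
  ∀ ⦃t u : ℝ⦄, t ∈ s → u ∈ s →
    |t - u| / q - Q ≤ dist (α t) (α u) ∧ dist (α t) (α u) ≤ q * |t - u| + Q

/-- A geodesic metric space: any two points are joined by a unit-speed geodesic. -/
def GeodesicSpace (X : Type*) [MetricSpace X] : Prop :=
  ∀ x y : X, ∃ g : ℝ → X, g 0 = x ∧ g (dist x y) = y ∧
    ∀ s t : ℝ, s ∈ Set.Icc 0 (dist x y) → t ∈ Set.Icc 0 (dist x y) →
      dist (g s) (g t) = |s - t|

/-- A geodesic ray based at `o`: unit-speed isometric embedding of `[0,∞)` with value `o` at `0`. -/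
def GeodesicRay {X : Type*} [MetricSpace X] (o : X) (a : ℝ → X) : Prop :=
  a 0 = o ∧ ∀ s t : ℝ, 0 ≤ s → 0 ≤ t → dist (a s) (a t) = |s - t|

/-- The first time the ray `α` leaves the open ball of radius `r` about `o`. -/
noncomputable def exitTime {X : Type*} [MetricSpace X] (o : X) (α : ℝ → X) (r : ℝ) : ℝ :=
  sInf {t : ℝ | 0 ≤ t ∧ r ≤ dist o (α t)}

/-- A unit-speed geodesic on `[0,L]`. -/
def UnitGeo {X : Type*} [MetricSpace X] (g : ℝ → X) (L : ℝ) : Prop :=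
  ∀ s t : ℝ, s ∈ Set.Icc 0 L → t ∈ Set.Icc 0 L → dist (g s) (g t) = |s - t|

/-- An affinely parameterized geodesic on `[0,1]`. -/
def Geodesic01 {X : Type*} [MetricSpace X] (g : ℝ → X) : Prop :=
  ∀ s t : ℝ, s ∈ Set.Icc (0:ℝ) 1 → t ∈ Set.Icc (0:ℝ) 1 →
    dist (g s) (g t) = |s - t| * dist (g 0) (g 1)

/-- CAT(0)-style convexity of the metric: the distance between two affinely
parameterized geodesics is a convex function. -/
def CAT0Convex (X : Type*) [MetricSpace X] : Prop :=
  ∀ g₁ g₂ : ℝ → X, Geodesic01 g₁ → Geodesic01 g₂ →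
    ConvexOn ℝ (Set.Icc (0:ℝ) 1) (fun t => dist (g₁ t) (g₂ t))

/-- Uniqueness of geodesics. -/
def UniqueGeodesics (X : Type*) [MetricSpace X] : Prop :=
  ∀ g₁ g₂ : ℝ → X, Geodesic01 g₁ → Geodesic01 g₂ → g₁ 0 = g₂ 0 → g₁ 1 = g₂ 1 →
    Set.EqOn g₁ g₂ (Set.Icc 0 1)

/-- if infinitely many of the geodesic segments [α(n),β(n)] meet a fixed
closed ball, then after recentering by arc length a subsequence converges uniformly on
compact sets to a complete bi-infinite geodesic line γ, whose positive direction comes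
from the α(n) side and negative direction from the β(n) side. -/
theorem stmt13 {X : Type*} [MetricSpace X] [ProperSpace X] (hX : GeodesicSpace X) (o : X)
    (α β : ℝ → X) (hα : GeodesicRay o α) (hβ : GeodesicRay o β)
    (seg : ℕ → ℝ → X)
    (hseg : ∀ n : ℕ, seg n 0 = β n ∧ seg n (dist (α n) (β n)) = α n ∧
      UnitGeo (seg n) (dist (α n) (β n)))
    (x₀ : X) (K : ℝ) (hK : 0 ≤ K)
    (φ : ℕ → ℕ) (hφ : StrictMono φ)
    (hball : ∀ k, ∃ t ∈ Set.Icc 0 (dist (α (φ k)) (β (φ k))), dist x₀ (seg (φ k) t) ≤ K) :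
    ∃ σ : ℕ → ℕ, StrictMono σ ∧ ∃ c : ℕ → ℝ, ∃ γ : ℝ → X,
      (∀ s t : ℝ, dist (γ s) (γ t) = |s - t|) ∧
      (∀ k, c k ∈ Set.Icc 0 (dist (α (φ (σ k))) (β (φ (σ k)))) ∧
        dist x₀ (seg (φ (σ k)) (c k)) ≤ K) ∧
      (∀ T : ℝ, ∃ N : ℕ, ∀ k ≥ N,
        T ≤ c k ∧ T ≤ dist (α (φ (σ k))) (β (φ (σ k))) - c k) ∧
      (∀ T > (0:ℝ), ∀ ε > (0:ℝ), ∃ N : ℕ, ∀ k ≥ N, ∀ t ∈ Set.Icc (-T) T,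
        dist (seg (φ (σ k)) (c k + t)) (γ t) ≤ ε) := by
    classical
  obtain ⟨hβ0, hβiso⟩ := hβ
  obtain ⟨hα0, hαiso⟩ := hα
  choose c₀ hc₀mem hc₀ball using hball
  set d : ℕ → ℝ := fun k => dist (α (φ k)) (β (φ k)) with hd
  have hc₀0 : ∀ k, 0 ≤ c₀ k := fun k => (hc₀mem k).1
  have hc₀d : ∀ k, c₀ k ≤ d k := fun k => (hc₀mem k).2
  have hd0 : ∀ k, 0 ≤ d k := fun k => le_trans (hc₀0 k) (hc₀d k)
  set D := dist o x₀ with hD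
  have hβn : ∀ n : ℕ, dist o (β n) = n := by
    intro n
    have h := hβiso 0 n le_rfl (Nat.cast_nonneg n)
    rw [hβ0] at h
    rw [h, abs_of_nonpos (by simp [Nat.cast_nonneg])]
    ring
  have hαn : ∀ n : ℕ, dist o (α n) = n := by
    intro n
    have h := hαiso 0 n le_rfl (Nat.cast_nonneg n)
    rw [hα0] at h
    rw [h, abs_of_nonpos (by simp [Nat.cast_nonneg])]
    ring
  -- lower bounds on c₀ and d - c₀
  have hlow : ∀ k, (φ k : ℝ) - D - K ≤ c₀ k := by
    intro k
    have h1 : dist (seg (φ k) 0) (seg (φ k) (c₀ k)) = |0 - c₀ k| :=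
      (hseg (φ k)).2.2 0 (c₀ k) ⟨le_rfl, hd0 k⟩ (hc₀mem k)
    rw [(hseg (φ k)).1] at h1
    have h2 : |0 - c₀ k| = c₀ k := by
      rw [zero_sub, abs_neg, abs_of_nonneg (hc₀0 k)]
    have h3 : (φ k : ℝ) = dist o (β (φ k)) := (hβn (φ k)).symm
    have h4 : dist o (β (φ k)) ≤ dist o x₀ + dist x₀ (seg (φ k) (c₀ k)) +
        dist (seg (φ k) (c₀ k)) (β (φ k)) := dist_triangle4 _ _ _ _
    have h5 : dist (seg (φ k) (c₀ k)) (β (φ k)) = c₀ k := by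
      rw [dist_comm, h1, h2]
    have h6 := hc₀ball k
    linarith
  have hlow2 : ∀ k, (φ k : ℝ) - D - K ≤ d k - c₀ k := by
    intro k
    have h1 : dist (seg (φ k) (c₀ k)) (seg (φ k) (d k)) = |c₀ k - d k| :=
      (hseg (φ k)).2.2 (c₀ k) (d k) (hc₀mem k) ⟨hd0 k, le_rfl⟩
    rw [(hseg (φ k)).2.1] at h1
    have h2 : |c₀ k - d k| = d k - c₀ k := by
      rw [abs_of_nonpos (by linarith [hc₀d k])]; ring
    have h3 : (φ k : ℝ) = dist o (α (φ k)) := (hαn (φ k)).symm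
    have h4 : dist o (α (φ k)) ≤ dist o x₀ + dist x₀ (seg (φ k) (c₀ k)) +
        dist (seg (φ k) (c₀ k)) (α (φ k)) := dist_triangle4 _ _ _ _
    have h6 := hc₀ball k
    rw [h1, h2] at h4
    linarith
  -- the clamped reparameterizations
  set p : ℕ → ℝ → ℝ := fun k t => max 0 (min (c₀ k + t) (d k)) with hp
  have hpmem : ∀ k t, p k t ∈ Set.Icc 0 (d k) := fun k t =>
    ⟨le_max_left _ _, max_le (hd0 k) (min_le_right _ _)⟩
  have hplip : ∀ k s t, |p k s - p k t| ≤ |s - t| := by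
    intro k s t
    calc |p k s - p k t|
        = |max (min (c₀ k + s) (d k)) 0 - max (min (c₀ k + t) (d k)) 0| := by
          simp only [hp]; rw [max_comm, max_comm (min (c₀ k + t) (d k))]
      _ ≤ |min (c₀ k + s) (d k) - min (c₀ k + t) (d k)| := abs_max_sub_max_le_abs _ _ _
      _ ≤ max |(c₀ k + s) - (c₀ k + t)| |d k - d k| := abs_min_sub_min_le_max _ _ _ _
      _ = |s - t| := by
          rw [sub_self, abs_zero, max_eq_left (abs_nonneg _)]
          congr 1; ring
  have hpid : ∀ k t, 0 ≤ c₀ k + t → c₀ k + t ≤ d k → p k t = c₀ k + t := by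
    intro k t h1 h2
    simp only [hp]
    rw [min_eq_left h2, max_eq_right h1]
  have hlipF : ∀ k, LipschitzWith 1 (fun t => seg (φ k) (p k t)) := by
    intro k
    apply LipschitzWith.of_dist_le_mul
    intro s t
    rw [(hseg (φ k)).2.2 _ _ (hpmem k s) (hpmem k t), Real.dist_eq]
    simpa using hplip k s t
  set F : ℕ → C(ℝ, X) := fun k => ⟨fun t => seg (φ k) (p k t), (hlipF k).continuous⟩ with hF
  set S : Set C(ℝ, X) :=
    {f | (∀ s t : ℝ, dist (f s) (f t) ≤ dist s t) ∧ dist (f 0) x₀ ≤ K} with hS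
  have hp0 : ∀ k, p k 0 = c₀ k := by
    intro k
    rw [hpid k 0 (by linarith [hc₀0 k]) (by linarith [hc₀d k]), add_zero]
  have hFS : ∀ k, F k ∈ S := by
    intro k
    constructor
    · intro s t
      have := (hlipF k).dist_le_mul s t
      show dist (seg (φ k) (p k s)) (seg (φ k) (p k t)) ≤ dist s t
      simpa using this
    · show dist (seg (φ k) (p k 0)) x₀ ≤ K
      rw [hp0 k, dist_comm]
      exact hc₀ball k
  -- compactness via Arzelà–Ascoli
  have hT : IsCompact {f : ℝ → X | (∀ s t : ℝ, dist (f s) (f t) ≤ dist s t) ∧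
      dist (f 0) x₀ ≤ K} := by
    set T := {f : ℝ → X | (∀ s t : ℝ, dist (f s) (f t) ≤ dist s t) ∧ dist (f 0) x₀ ≤ K}
    have hclosed : IsClosed T := by
      have : T = (⋂ (s : ℝ) (t : ℝ), {f : ℝ → X | dist (f s) (f t) ≤ dist s t}) ∩
          {f : ℝ → X | dist (f 0) x₀ ≤ K} := by
        ext f; simp [T, Set.mem_iInter]
      rw [this]
      exact IsClosed.inter
        (isClosed_iInter fun s => isClosed_iInter fun t =>
          isClosed_le ((continuous_apply s).dist (continuous_apply t)) continuous_const)
        (isClosed_le ((continuous_apply 0).dist continuous_const) continuous_const)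
    have hsub : T ⊆ Set.pi Set.univ (fun t : ℝ => closedBall x₀ (K + |t|)) := by
      intro f hf t _
      have := hf.1 t 0
      simp only [mem_closedBall]
      calc dist (f t) x₀ ≤ dist (f t) (f 0) + dist (f 0) x₀ := dist_triangle _ _ _
        _ ≤ dist t 0 + K := add_le_add this hf.2
        _ = K + |t| := by rw [Real.dist_eq, sub_zero, add_comm]
    exact IsCompact.of_isClosed_subset (isCompact_univ_pi fun t => isCompact_closedBall _ _)
      hclosed hsub
  have hSc : IsCompact S := by
    apply ArzelaAscoli.isCompact_of_equicontinuous
    · have himg : ContinuousMap.toFun '' S =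
          {f : ℝ → X | (∀ s t : ℝ, dist (f s) (f t) ≤ dist s t) ∧ dist (f 0) x₀ ≤ K} := by
        ext f
        constructor
        · rintro ⟨g, hg, rfl⟩; exact hg
        · intro hf
          refine ⟨⟨f, ?_⟩, hf, rfl⟩
          have : LipschitzWith 1 f := LipschitzWith.of_dist_le_mul (by
            intro x y; simpa using hf.1 x y)
          exact this.continuous
      rw [himg]; exact hT
    · apply Metric.equicontinuous_of_continuity_modulus (fun r => r) tendsto_id
      intro x y f
      exact f.2.1 x y
  obtain ⟨γC, hγS, σ, hσ, htend⟩ := hSc.tendsto_subseq hFS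
  -- the key uniform lower bound
  have key3 : ∀ T : ℝ, ∃ N : ℕ, ∀ k ≥ N, T ≤ c₀ (σ k) ∧ T ≤ d (σ k) - c₀ (σ k) := by
    intro T
    obtain ⟨N, hN⟩ := exists_nat_ge (T + D + K)
    refine ⟨N, fun k hk => ?_⟩
    have h1 : (N : ℝ) ≤ (φ (σ k) : ℝ) := by
      exact_mod_cast le_trans (le_trans hk hσ.le_apply) hφ.le_apply
    exact ⟨by linarith [hlow (σ k)], by linarith [hlow2 (σ k)]⟩
  -- pointwise convergence
  have hpt : ∀ t : ℝ, Tendsto (fun k => F (σ k) t) atTop (𝓝 (γC t)) :=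
    fun t => ((continuous_eval_const t).tendsto γC).comp htend
  -- γC is a complete geodesic line
  have hline : ∀ s t : ℝ, dist (γC s) (γC t) = |s - t| := by
    intro s t
    have hdist : Tendsto (fun k => dist (F (σ k) s) (F (σ k) t)) atTop
        (𝓝 (dist (γC s) (γC t))) := (hpt s).dist (hpt t)
    obtain ⟨N, hN⟩ := key3 (max |s| |t|)
    have hev : ∀ k ≥ N, dist (F (σ k) s) (F (σ k) t) = |s - t| := by
      intro k hk
      obtain ⟨h1, h2⟩ := hN k hk
      have hms := le_max_left |s| |t|
      have hmt := le_max_right |s| |t|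
      have hs1 : 0 ≤ c₀ (σ k) + s := by have := neg_abs_le s; linarith
      have hs2 : c₀ (σ k) + s ≤ d (σ k) := by have := le_abs_self s; linarith
      have ht1 : 0 ≤ c₀ (σ k) + t := by have := neg_abs_le t; linarith
      have ht2 : c₀ (σ k) + t ≤ d (σ k) := by have := le_abs_self t; linarith
      have es : F (σ k) s = seg (φ (σ k)) (c₀ (σ k) + s) := by
        show seg (φ (σ k)) (p (σ k) s) = _
        rw [hpid _ _ hs1 hs2]
      have et : F (σ k) t = seg (φ (σ k)) (c₀ (σ k) + t) := by
        show seg (φ (σ k)) (p (σ k) t) = _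
        rw [hpid _ _ ht1 ht2]
      rw [es, et, (hseg (φ (σ k))).2.2 _ _ ⟨hs1, hs2⟩ ⟨ht1, ht2⟩]
      congr 1; ring
    have hconst : Tendsto (fun k => dist (F (σ k) s) (F (σ k) t)) atTop (𝓝 |s - t|) :=
      tendsto_const_nhds.congr' (eventually_atTop.2 ⟨N, fun k hk => (hev k hk).symm⟩)
    exact tendsto_nhds_unique hdist hconst
  refine ⟨σ, hσ, fun k => c₀ (σ k), fun t => γC t, hline, fun k => ⟨hc₀mem (σ k), hc₀ball (σ k)⟩,
    key3, ?_⟩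
  -- uniform convergence on compact intervals
  intro T hT0 ε hε
  have hu := ContinuousMap.tendsto_iff_forall_isCompact_tendstoUniformlyOn.mp htend
    (Set.Icc (-T) T) isCompact_Icc
  rw [Metric.tendstoUniformlyOn_iff] at hu
  obtain ⟨N₁, hN₁⟩ := eventually_atTop.1 (hu ε hε)
  obtain ⟨N₂, hN₂⟩ := key3 T
  refine ⟨max N₁ N₂, fun k hk t ht => ?_⟩
  have h1 := hN₁ k (le_trans (le_max_left _ _) hk)
  obtain ⟨hc1, hc2⟩ := hN₂ k (le_trans (le_max_right _ _) hk)
  obtain ⟨htl, htr⟩ := ht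
  have heq : seg (φ (σ k)) (c₀ (σ k) + t) = F (σ k) t := by
    show _ = seg (φ (σ k)) (p (σ k) t)
    rw [hpid _ _ (by linarith) (by linarith)]
  rw [heq, dist_comm]
  exact le_of_lt (h1 t ⟨htl, htr⟩)
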